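/- Let P, Q ∈ A₁(K) with [Q,P] = 1, where K has characteristic zero. Writing elements of A₁(K) in the normal form Σ a_{ij} x^i y^j, if the (1,0)-leading term of Q (the sum of monomials of maximal x-degree) equals λ x^s y for some λ ∈ K*, then s = 0. -/

import Mathlib

open scoped BigOperators

variable (K : Type*) [Field K]

/-- Defining relation of the first Weyl algebra: `y*x = x*y + 1`. -/
inductive WeylRel : FreeAlgebra K (Fin 2) → FreeAlgebra K (Fin 2) → Prop
  | rel : WeylRel (FreeAlgebra.ι K 1 * FreeAlgebra.ι K 0) (FreeAlgebra.ι K 0 * FreeAlgebra.ι K 1 + 1)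

/-- The first Weyl algebra `A₁(K) = K⟨x,y⟩/(yx - xy - 1)`. -/
abbrev Weyl := RingQuot (WeylRel K)

/-- The generator `x` of `A₁(K)`. -/
abbrev wx : Weyl K := RingQuot.mkAlgHom K (WeylRel K) (FreeAlgebra.ι K 0)

/-- The generator `y` of `A₁(K)`. -/
abbrev wy : Weyl K := RingQuot.mkAlgHom K (WeylRel K) (FreeAlgebra.ι K 1)

noncomputable section

open Polynomial

def wmon (p : ℕ × ℕ) : Weyl K := wx K ^ p.1 * wy K ^ p.2

theorem wrel : wy K * wx K = wx K * wy K + 1 := by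
  have := RingQuot.mkAlgHom_rel K (WeylRel.rel (K := K))
  simpa [map_mul, map_add, map_one] using this

def mX : Module.End K (Polynomial (Polynomial K)) := LinearMap.mulLeft K Polynomial.X

def mY : Module.End K (Polynomial (Polynomial K)) :=
  LinearMap.mulLeft K (Polynomial.C Polynomial.X) +
    (Polynomial.derivative (R := Polynomial K)).restrictScalars K

theorem mYX : mY K * mX K = mX K * mY K + 1 := by
  apply LinearMap.ext; intro f
  simp [mX, mY, Module.End.mul_apply, Polynomial.derivative_mul]
  ring

def rho : Weyl K →ₐ[K] Module.End K (Polynomial (Polynomial K)) :=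
  RingQuot.liftAlgHom K ⟨FreeAlgebra.lift K ![mX K, mY K], by
    rintro x y ⟨⟩
    simp only [map_mul, map_add, map_one, FreeAlgebra.lift_ι_apply,
      Matrix.cons_val_one, Matrix.cons_val_zero, Matrix.head_cons]
    rw [mYX]⟩

theorem rho_wx : rho K (wx K) = mX K := by
  simp [rho, RingQuot.liftAlgHom_mkAlgHom_apply, FreeAlgebra.lift_ι_apply]

theorem rho_wy : rho K (wy K) = mY K := by
  simp [rho, RingQuot.liftAlgHom_mkAlgHom_apply, FreeAlgebra.lift_ι_apply]

def eps : Weyl K →ₗ[K] Polynomial (Polynomial K) where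
  toFun w := rho K w 1
  map_add' u v := by simp only [map_add]; rfl
  map_smul' c u := by simp only [map_smul]; rfl

theorem eps_mon (i j : ℕ) : eps K (wmon K (i, j)) = X ^ i * C (X ^ j) := by
  have hY : ∀ j : ℕ, (mY K ^ j) 1 = C (X ^ j) := by
    intro j
    induction j with
    | zero => simp
    | succ j ih =>
      rw [pow_succ', Module.End.mul_apply, ih]
      simp only [mY, LinearMap.add_apply, LinearMap.mulLeft_apply,
        LinearMap.restrictScalars_apply, ← C_pow, derivative_C, add_zero, ← C_mul, ← pow_succ']
  have hX : ∀ (i : ℕ) (g : Polynomial (Polynomial K)), (mX K ^ i) g = X ^ i * g := by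
    intro i g
    induction i with
    | zero => simp
    | succ i ih => rw [pow_succ', Module.End.mul_apply, ih]; simp [mX, pow_succ']; ring
  show rho K (wmon K (i, j)) 1 = _
  rw [wmon, map_mul, map_pow, map_pow, rho_wx, rho_wy, Module.End.mul_apply, hY, hX]

def kap (n j : ℕ) : Weyl K →ₗ[K] K :=
  (Polynomial.lcoeff K j) ∘ₗ
    (((Polynomial.lcoeff (Polynomial K) n).restrictScalars K) ∘ₗ eps K)

theorem kap_mon (n j i l : ℕ) :
    kap K n j (wmon K (i, l)) = if i = n ∧ l = j then 1 else 0 := by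
  rw [kap]
  simp only [LinearMap.comp_apply, LinearMap.restrictScalars_apply, eps_mon, lcoeff_apply]
  rw [mul_comm, C_mul_X_pow_eq_monomial, coeff_monomial]
  split_ifs with h1 <;> simp [coeff_X_pow, h1] <;> omega

theorem kap_one (n j : ℕ) : kap K n j 1 = if n = 0 ∧ j = 0 then 1 else 0 := by
  have : (1 : Weyl K) = wmon K (0, 0) := by simp [wmon]
  rw [this, kap_mon]
  simp [eq_comm (a := (0:ℕ))]

/-- `y * x^i = x^i * y + i • x^(i-1)` -/
theorem ycomm (i : ℕ) :
    wy K * wx K ^ i = wx K ^ i * wy K + (i : K) • wx K ^ (i - 1) := by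
  induction i with
  | zero => simp
  | succ i ih =>
    rw [pow_succ, ← mul_assoc, ih, add_mul, mul_assoc, wrel, smul_mul_assoc]
    cases i with
    | zero => simp [mul_add]
    | succ i =>
      rw [← pow_succ]
      simp only [Nat.succ_sub_one, Nat.cast_add, Nat.cast_one, mul_add, mul_one, add_smul, one_smul, ← mul_assoc]
      abel

def F (n : ℕ) : Submodule K (Weyl K) := Submodule.span K (wmon K '' {p | p.1 ≤ n})

theorem mem_F {i j n : ℕ} (h : i ≤ n) : wmon K (i, j) ∈ F K n :=
  Submodule.subset_span ⟨(i, j), h, rfl⟩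

theorem F_mono {m n : ℕ} (h : m ≤ n) : F K m ≤ F K n :=
  Submodule.span_mono (Set.image_mono fun p hp => le_trans hp h)

theorem F_map {L : Weyl K →ₗ[K] Weyl K} {n m : ℕ}
    (h : ∀ p : ℕ × ℕ, p.1 ≤ n → L (wmon K p) ∈ F K m) :
    ∀ w ∈ F K n, L w ∈ F K m := by
  intro w hw
  have hle : F K n ≤ (F K m).comap L := by
    rw [F]
    refine Submodule.span_le.mpr ?_
    rintro _ ⟨p, hp, rfl⟩
    exact h p hp
  exact hle hw

theorem FY {n : ℕ} {w : Weyl K} (hw : w ∈ F K n) : wy K * w ∈ F K n := by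
  refine F_map K (L := LinearMap.mulLeft K (wy K)) ?_ w hw
  rintro ⟨i, j⟩ hij
  simp only [LinearMap.mulLeft_apply, wmon, ← mul_assoc, ycomm, add_mul, smul_mul_assoc]
  refine Submodule.add_mem _ ?_ (Submodule.smul_mem _ _ ?_)
  · rw [mul_assoc, ← pow_succ']
    exact mem_F K hij
  · exact mem_F K (le_trans (Nat.sub_le _ _) hij)

theorem FYpow {n : ℕ} (j : ℕ) {w : Weyl K} (hw : w ∈ F K n) : wy K ^ j * w ∈ F K n := by
  induction j with
  | zero => simpa using hw
  | succ j ih => rw [pow_succ', mul_assoc]; exact FY K ih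

theorem FYR {n : ℕ} {w : Weyl K} (hw : w ∈ F K n) : w * wy K ∈ F K n := by
  refine F_map K (L := LinearMap.mulRight K (wy K)) ?_ w hw
  rintro ⟨i, j⟩ hij
  simp only [LinearMap.mulRight_apply, wmon, mul_assoc, ← pow_succ]
  exact mem_F K hij

theorem FX {n : ℕ} {w : Weyl K} (hw : w ∈ F K n) : wx K * w ∈ F K (n + 1) := by
  refine F_map K (L := LinearMap.mulLeft K (wx K)) ?_ w hw
  rintro ⟨i, j⟩ hij
  simp only [LinearMap.mulLeft_apply, wmon, ← mul_assoc, ← pow_succ']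
  exact mem_F K (by omega)

theorem FXpow {n : ℕ} (i : ℕ) {w : Weyl K} (hw : w ∈ F K n) : wx K ^ i * w ∈ F K (i + n) := by
  induction i with
  | zero => simpa using hw
  | succ i ih =>
    rw [pow_succ', mul_assoc]
    have := FX K ih
    exact F_mono K (by omega) this

theorem Fmul {m n : ℕ} {u w : Weyl K} (hu : u ∈ F K m) (hw : w ∈ F K n) :
    u * w ∈ F K (m + n) := by
  refine F_map K (L := LinearMap.mulRight K w) ?_ u hu
  rintro ⟨i, j⟩ hij
  simp only [LinearMap.mulRight_apply, wmon, mul_assoc]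
  have : wx K ^ i * (wy K ^ j * w) ∈ F K (i + n) := FXpow K i (FYpow K j hw)
  exact F_mono K (by omega) this

theorem FYRpow {n : ℕ} (l : ℕ) {w : Weyl K} (hw : w ∈ F K n) : w * wy K ^ l ∈ F K n := by
  induction l with
  | zero => simpa using hw
  | succ l ih => rw [pow_succ, ← mul_assoc]; exact FYR K ih

theorem ymon (i j : ℕ) : wy K * (wx K ^ i * wy K ^ j) =
    wx K ^ i * wy K ^ (j + 1) + (i : K) • (wx K ^ (i - 1) * wy K ^ j) := by
  rw [← mul_assoc, ycomm]
  simp only [add_mul, smul_mul_assoc, mul_assoc, ← pow_succ']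

theorem monmul_left (k i j : ℕ) :
    wx K ^ k * (wx K ^ i * wy K ^ j) = wx K ^ (k + i) * wy K ^ j := by
  rw [← mul_assoc, ← pow_add]

theorem monmulr (a b : ℕ) : (wx K ^ a * wy K ^ b) * wy K = wx K ^ a * wy K ^ (b + 1) := by
  rw [mul_assoc, ← pow_succ]

/-- two-step commutation. -/
theorem ypowcomm (i j : ℕ) :
    ∃ e : Weyl K, e ∈ F K (i - 2) ∧ (i ≤ 1 → e = 0) ∧
      wy K ^ (j + 1) * wx K ^ i =
        wx K ^ i * wy K ^ (j + 1) + ((i * (j + 1) : ℕ) : K) • (wx K ^ (i - 1) * wy K ^ j) + e := by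
  induction j with
  | zero =>
    refine ⟨0, Submodule.zero_mem _, fun _ => rfl, ?_⟩
    rw [pow_one, ycomm]
    simp
  | succ j ih =>
    obtain ⟨e, heF, he1, heq⟩ := ih
    refine ⟨((i * (j + 1) : ℕ) : K) • (((i - 1 : ℕ) : K) • (wx K ^ (i - 2) * wy K ^ j))
        + wy K * e, ?_, ?_, ?_⟩
    · exact Submodule.add_mem _
        (Submodule.smul_mem _ _ (Submodule.smul_mem _ _ (mem_F K le_rfl))) (FY K heF)
    · intro hi
      rw [he1 hi, mul_zero, add_zero]
      interval_cases i <;> simp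
    · have step : wy K ^ (j + 1 + 1) * wx K ^ i = wy K * (wy K ^ (j + 1) * wx K ^ i) := by
        rw [pow_succ', mul_assoc]
      rw [step, heq]
      simp only [mul_add, mul_smul_comm, ymon, smul_add]
      simp only [show i - 1 - 1 = i - 2 from by omega]
      push_cast
      module

/-- expansion of a product of two monomials. -/
theorem monexpand (i j k l : ℕ) :
    ∃ u : Weyl K, u ∈ F K (i + k - 1) ∧
      wmon K (i, j) * wmon K (k, l) = wx K ^ (i + k) * wy K ^ (j + l) + u := by
  rcases j with _ | j
  · refine ⟨0, Submodule.zero_mem _, ?_⟩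
    simp only [wmon, pow_zero, mul_one, add_zero, Nat.zero_add, monmul_left]
  · obtain ⟨e, heF, he1, heq⟩ := ypowcomm K k j
    refine ⟨((k * (j + 1) : ℕ) : K) • (wx K ^ i * ((wx K ^ (k - 1) * wy K ^ j) * wy K ^ l))
        + wx K ^ i * (e * wy K ^ l), ?_, ?_⟩
    · refine Submodule.add_mem _ ?_ ?_
      · rcases Nat.eq_zero_or_pos k with hk | hk
        · simp [hk]
        · refine Submodule.smul_mem _ _ (F_mono K (by omega)
            (FXpow K i (FYRpow K l (mem_F K le_rfl))))
      · rcases le_or_gt k 1 with hk | hk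
        · rw [he1 hk]; simp
        · exact F_mono K (by omega) (FXpow K i (FYRpow K l heF))
    · have h1 : wmon K (i, j + 1) * wmon K (k, l) =
          wx K ^ i * ((wy K ^ (j + 1) * wx K ^ k) * wy K ^ l) := by
        simp only [wmon]; noncomm_ring
      rw [h1, heq]
      simp only [add_mul, smul_mul_assoc, mul_add, mul_smul_comm]
      rw [show wx K ^ i * (wx K ^ k * wy K ^ (j + 1) * wy K ^ l)
          = wx K ^ (i + k) * wy K ^ (j + 1 + l) from by
        rw [mul_assoc, ← pow_add, monmul_left]]
      abel

theorem F_mapN {L : Weyl K →ₗ[K] Weyl K} {n : ℕ} {N : Submodule K (Weyl K)}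
    (h : ∀ p : ℕ × ℕ, p.1 ≤ n → L (wmon K p) ∈ N) : ∀ w ∈ F K n, L w ∈ N := by
  intro w hw
  have hle : F K n ≤ N.comap L := by
    rw [F]
    refine Submodule.span_le.mpr ?_
    rintro _ ⟨p, hp, rfl⟩
    exact h p hp
  exact hle hw

theorem Fcomm {m n : ℕ} {u w : Weyl K} (hu : u ∈ F K m) (hw : w ∈ F K n) :
    u * w - w * u ∈ F K (m + n - 1) := by
  have core : ∀ p q : ℕ × ℕ, p.1 ≤ m → q.1 ≤ n →
      wmon K p * wmon K q - wmon K q * wmon K p ∈ F K (m + n - 1) := by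
    rintro ⟨i, j⟩ ⟨k, l⟩ hi hk
    obtain ⟨u1, hu1, he1⟩ := monexpand K i j k l
    obtain ⟨u2, hu2, he2⟩ := monexpand K k l i j
    rw [he1, he2, show k + i = i + k from by omega, show l + j = j + l from by omega]
    have : wx K ^ (i + k) * wy K ^ (j + l) + u1 - (wx K ^ (i + k) * wy K ^ (j + l) + u2)
        = u1 - u2 := by abel
    rw [this]
    exact Submodule.sub_mem _ (F_mono K (by omega) hu1) (F_mono K (by omega) hu2)
  have h1 : ∀ q : ℕ × ℕ, q.1 ≤ n → u * wmon K q - wmon K q * u ∈ F K (m + n - 1) := by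
    intro q hq
    refine F_mapN K (L := LinearMap.mulRight K (wmon K q) - LinearMap.mulLeft K (wmon K q))
      (n := m) ?_ u hu
    intro p hp
    simpa using core p q hp hq
  refine F_mapN K (L := LinearMap.mulLeft K u - LinearMap.mulRight K u) (n := n) ?_ w hw
  intro q hq
  simpa using h1 q hq

theorem F0comm {u w : Weyl K} (hu : u ∈ F K 0) (hw : w ∈ F K 0) : u * w = w * u := by
  have core : ∀ p q : ℕ × ℕ, p.1 ≤ 0 → q.1 ≤ 0 →
      wmon K p * wmon K q - wmon K q * wmon K p = 0 := by
    rintro ⟨i, j⟩ ⟨k, l⟩ hi hk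
    obtain rfl : i = 0 := by omega
    obtain rfl : k = 0 := by omega
    simp only [wmon, pow_zero, one_mul]
    rw [← pow_add, ← pow_add, add_comm, sub_self]
  have h1 : ∀ q : ℕ × ℕ, q.1 ≤ 0 → u * wmon K q - wmon K q * u ∈ (⊥ : Submodule K (Weyl K)) := by
    intro q hq
    refine F_mapN K (L := LinearMap.mulRight K (wmon K q) - LinearMap.mulLeft K (wmon K q))
      (n := 0) ?_ u hu
    intro p hp
    simpa using core p q hp hq
  have h2 : u * w - w * u ∈ (⊥ : Submodule K (Weyl K)) := by
    refine F_mapN K (L := LinearMap.mulLeft K u - LinearMap.mulRight K u) (n := 0) ?_ w hw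
    intro q hq
    simpa using h1 q hq
  rw [← sub_eq_zero]
  simpa using h2

theorem ypowcomm' (i j : ℕ) :
    ∃ e : Weyl K, e ∈ F K (i - 2) ∧ (i ≤ 1 → e = 0) ∧
      wy K ^ j * wx K ^ i =
        wx K ^ i * wy K ^ j + ((i * j : ℕ) : K) • (wx K ^ (i - 1) * wy K ^ (j - 1)) + e := by
  rcases j with _ | j
  · exact ⟨0, Submodule.zero_mem _, fun _ => rfl, by simp⟩
  · obtain ⟨e, heF, he1, heq⟩ := ypowcomm K i j
    exact ⟨e, heF, he1, by simpa using heq⟩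

theorem mem_F' {n : ℕ} {p : ℕ × ℕ} (hp : p.1 ≤ n) : wmon K p ∈ F K n :=
  Submodule.subset_span ⟨p, hp, rfl⟩

/-- the commutator of `x^s y` against a monomial. -/
theorem topcomm (s i j : ℕ) :
    ∃ r : Weyl K, r ∈ F K (i + s - 2) ∧ (s ≤ 1 → r = 0) ∧
      (wx K ^ s * wy K) * (wx K ^ i * wy K ^ j) - (wx K ^ i * wy K ^ j) * (wx K ^ s * wy K) =
        ((i : K) - (s : K) * (j : K)) • (wx K ^ (s + i - 1) * wy K ^ j) + r := by
  obtain ⟨e, heF, he1, heq⟩ := ypowcomm' K s j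
  refine ⟨-(wx K ^ i * (e * wy K)), ?_, ?_, ?_⟩
  · rcases le_or_gt s 1 with hs | hs
    · rw [he1 hs]; simp
    · exact Submodule.neg_mem _ (F_mono K (by omega) (FXpow K i (FYR K heF)))
  · intro hs; rw [he1 hs]; simp
  · have hT1 : (wx K ^ s * wy K) * (wx K ^ i * wy K ^ j) =
        wx K ^ (s + i) * wy K ^ (j + 1) + (i : K) • (wx K ^ (s + i - 1) * wy K ^ j) := by
      rw [mul_assoc, ymon]
      simp only [mul_add, mul_smul_comm, monmul_left]
      rcases i with _ | i
      · simp
      · rw [show s + (i + 1 - 1) = s + (i + 1) - 1 from by omega]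
    have hT2 : (wx K ^ i * wy K ^ j) * (wx K ^ s * wy K) =
        wx K ^ (s + i) * wy K ^ (j + 1) + ((s * j : ℕ) : K) • (wx K ^ (s + i - 1) * wy K ^ j)
          + wx K ^ i * (e * wy K) := by
      have h1 : (wx K ^ i * wy K ^ j) * (wx K ^ s * wy K) =
          wx K ^ i * ((wy K ^ j * wx K ^ s) * wy K) := by noncomm_ring
      rw [h1, heq]
      simp only [add_mul, mul_add, mul_smul_comm, smul_mul_assoc, monmulr, monmul_left]
      rw [show i + s = s + i from by omega]
      rcases Nat.eq_zero_or_pos s with rfl | hs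
      · simp
      rcases Nat.eq_zero_or_pos j with rfl | hj
      · simp
      rw [show i + (s - 1) = s + i - 1 from by omega, show j - 1 + 1 = j from by omega]
    rw [hT1, hT2]
    have hco : ((i : K) - (s : K) * (j : K)) • (wx K ^ (s + i - 1) * wy K ^ j) =
        (i : K) • (wx K ^ (s + i - 1) * wy K ^ j)
          - ((s * j : ℕ) : K) • (wx K ^ (s + i - 1) * wy K ^ j) := by
      push_cast; module
    rw [hco]
    abel

/-- powers of `Q` have leading term `lam^m x^(s m) y^m`. -/
theorem Qpow {s : ℕ} (hs : 1 ≤ s) {lam : K} {Q R : Weyl K}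
    (hQd : Q = lam • (wx K ^ s * wy K) + R) (hRF : R ∈ F K (s - 1)) :
    ∀ m, 1 ≤ m → ∃ r ∈ F K (s * m - 1),
      Q ^ m = lam ^ m • (wx K ^ (s * m) * wy K ^ m) + r := by
  intro m hm
  induction m with
  | zero => omega
  | succ m ih =>
    have hA : wx K ^ s * wy K ∈ F K s := by
      rw [← pow_one (wy K)]; exact mem_F K le_rfl
    rcases Nat.eq_zero_or_pos m with rfl | hm1
    · refine ⟨R, by simpa using hRF, by simp [hQd]⟩
    · obtain ⟨r, hrF, hre⟩ := ih hm1
      have hsm : 1 ≤ s * m := Nat.one_le_iff_ne_zero.mpr (by positivity)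
      rw [show s * (m + 1) = s * m + s from by ring]
      have hAM : (wx K ^ s * wy K) * (wx K ^ (s * m) * wy K ^ m) =
          wx K ^ (s * m + s) * wy K ^ (m + 1)
            + ((s * m : ℕ) : K) • (wx K ^ (s * m + s - 1) * wy K ^ m) := by
        rw [mul_assoc, ymon]
        simp only [mul_add, mul_smul_comm, monmul_left]
        rw [show s + s * m = s * m + s from by ring,
          show s + (s * m - 1) = s * m + s - 1 from by omega]
      refine ⟨(lam ^ (m + 1) * ((s * m : ℕ) : K)) • (wx K ^ (s * m + s - 1) * wy K ^ m)
          + lam • ((wx K ^ s * wy K) * r)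
          + lam ^ m • (R * (wx K ^ (s * m) * wy K ^ m)) + R * r, ?_, ?_⟩
      · refine Submodule.add_mem _ (Submodule.add_mem _ (Submodule.add_mem _ ?_ ?_) ?_) ?_
        · exact Submodule.smul_mem _ _ (mem_F K le_rfl)
        · exact Submodule.smul_mem _ _ (F_mono K (by omega) (Fmul K hA hrF))
        · exact Submodule.smul_mem _ _
            (F_mono K (by omega) (Fmul K hRF (mem_F K le_rfl)))
        · exact F_mono K (by omega) (Fmul K hRF hrF)
      · rw [pow_succ', hre, hQd]
        simp only [mul_add, add_mul, smul_mul_assoc, mul_smul_comm, smul_smul, smul_add]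
        rw [← pow_succ, hAM]
        simp only [smul_add, smul_smul]
        abel

theorem kapF {m n : ℕ} (h : m < n) (j : ℕ) : ∀ w ∈ F K m, kap K n j w = 0 := by
  intro w hw
  induction hw using Submodule.span_induction with
  | mem x hx =>
    obtain ⟨p, hp, rfl⟩ := hx
    obtain ⟨i, l⟩ := p
    rw [kap_mon]
    have : ¬(i = n ∧ l = j) := by
      simp only [Set.mem_setOf_eq] at hp
      rintro ⟨rfl, -⟩; omega
    rw [if_neg this]
  | zero => simp
  | add u v _ _ hu hv => rw [map_add, hu, hv, add_zero]
  | smul a u _ hu => rw [map_smul, hu, smul_zero]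

theorem F_rep {n : ℕ} {w : Weyl K} (hw : w ∈ F K n) :
    ∃ c : (ℕ × ℕ) →₀ K, (∀ p ∈ c.support, p.1 ≤ n) ∧ w = ∑ p ∈ c.support, c p • wmon K p := by
  rw [F] at hw
  obtain ⟨l, hl, rfl⟩ := (Finsupp.mem_span_image_iff_linearCombination K).mp hw
  refine ⟨l, fun p hp => Finsupp.mem_supported K l |>.mp hl hp, ?_⟩
  rw [Finsupp.linearCombination_apply, Finsupp.sum]

theorem Fspan (w : Weyl K) : ∃ n, w ∈ F K n := by
  obtain ⟨w', rfl⟩ := RingQuot.mkAlgHom_surjective K (WeylRel K) w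
  induction w' using FreeAlgebra.induction with
  | grade0 r =>
    refine ⟨0, ?_⟩
    rw [AlgHom.commutes]
    have : (algebraMap K (Weyl K)) r = r • wmon K (0, 0) := by
      simp [wmon, Algebra.algebraMap_eq_smul_one]
    rw [this]
    exact Submodule.smul_mem _ _ (mem_F K le_rfl)
  | grade1 i =>
    refine ⟨1, ?_⟩
    match i with
    | 0 =>
      have : RingQuot.mkAlgHom K (WeylRel K) (FreeAlgebra.ι K 0) = wmon K (1, 0) := by
        simp [wmon]
      rw [this]; exact mem_F K le_rfl
    | 1 =>
      have : RingQuot.mkAlgHom K (WeylRel K) (FreeAlgebra.ι K 1) = wmon K (0, 1) := by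
        simp [wmon]
      rw [this]; exact mem_F K (by omega)
  | mul u v hu hv =>
    obtain ⟨nu, hnu⟩ := hu
    obtain ⟨nv, hnv⟩ := hv
    exact ⟨nu + nv, by rw [map_mul]; exact Fmul K hnu hnv⟩
  | add u v hu hv =>
    obtain ⟨nu, hnu⟩ := hu
    obtain ⟨nv, hnv⟩ := hv
    refine ⟨max nu nv, ?_⟩
    rw [map_add]
    exact Submodule.add_mem _ (F_mono K (le_max_left _ _) hnu)
      (F_mono K (le_max_right _ _) hnv)

/-- The key coefficient equations extracted from `[Q,P] = 1`. -/
theorem key {s t : ℕ} (hs : 1 ≤ s) {lam : K} {Q R P : Weyl K}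
    (hQd : Q = lam • (wx K ^ s * wy K) + R) (hRF : R ∈ F K (s - 1))
    (c : (ℕ × ℕ) →₀ K) (hc : ∀ p ∈ c.support, p.1 ≤ t)
    (hP : P = ∑ p ∈ c.support, c p • wmon K p)
    (hcomm : Q * P - P * Q = 1) (j : ℕ) :
    (if s + t - 1 = 0 ∧ j = 0 then (1 : K) else 0) =
      lam * (c (t, j) * ((t : K) - (s : K) * (j : K))) := by
  have hPF : P ∈ F K t := by
    rw [hP]
    exact Submodule.sum_mem _ fun p hp => Submodule.smul_mem _ _ (mem_F' K (hc p hp))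
  choose r hrF hr1 hr using fun p : ℕ × ℕ => topcomm K s p.1 p.2
  set A := wx K ^ s * wy K with hA
  -- expand the commutator
  have expand : Q * P - P * Q =
      (∑ p ∈ c.support, (lam * c p) •
        ((((p.1 : K) - (s : K) * (p.2 : K))) • (wx K ^ (s + p.1 - 1) * wy K ^ p.2) + r p))
        + (R * P - P * R) := by
    have h1 : Q * P - P * Q = lam • (A * P - P * A) + (R * P - P * R) := by
      rw [hQd]
      simp only [add_mul, mul_add, smul_mul_assoc, mul_smul_comm, smul_sub]
      abel
    have h2 : A * P - P * A = ∑ p ∈ c.support, c p • (A * wmon K p - wmon K p * A) := by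
      rw [hP, Finset.mul_sum, Finset.sum_mul, ← Finset.sum_sub_distrib]
      refine Finset.sum_congr rfl fun p _ => ?_
      simp only [mul_smul_comm, smul_mul_assoc, smul_sub]
    rw [h1, h2, Finset.smul_sum]
    congr 1
    refine Finset.sum_congr rfl fun p _ => ?_
    have hwm : wmon K p = wx K ^ p.1 * wy K ^ p.2 := rfl
    rw [smul_smul, hwm, hr p]
  rw [expand] at hcomm
  have happ := congrArg (kap K (s + t - 1) j) hcomm
  rw [kap_one] at happ
  rw [map_add, map_sum] at happ
  -- the remainder terms vanish
  have hrem : kap K (s + t - 1) j (R * P - P * R) = 0 := by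
    by_cases hst : s = 1 ∧ t = 0
    · obtain ⟨rfl, rfl⟩ := hst
      rw [F0comm K (by simpa using hRF) (by simpa using hPF)]
      simp
    · refine kapF K ?_ j _ (Fcomm K hRF hPF)
      omega
  have hterm : ∀ p ∈ c.support, kap K (s + t - 1) j
      ((lam * c p) • ((((p.1 : K) - (s : K) * (p.2 : K))) •
        (wx K ^ (s + p.1 - 1) * wy K ^ p.2) + r p)) =
      if p = (t, j) then lam * (c (t, j) * ((t : K) - (s : K) * (j : K))) else 0 := by
    intro p hp
    have hrp : kap K (s + t - 1) j (r p) = 0 := by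
      by_cases hst : s = 1 ∧ t = 0
      · rw [hr1 p (by omega)]; simp
      · refine kapF K ?_ j _ (hrF p)
        have := hc p hp
        omega
    have hmon : kap K (s + t - 1) j (wx K ^ (s + p.1 - 1) * wy K ^ p.2) =
        if s + p.1 - 1 = s + t - 1 ∧ p.2 = j then 1 else 0 := kap_mon K _ _ _ _
    rw [map_smul, map_add, map_smul, hrp, add_zero, hmon]
    by_cases hpe : p = (t, j)
    · subst hpe
      rw [if_pos ⟨rfl, rfl⟩, if_pos rfl]
      simp only [smul_eq_mul, mul_one, mul_assoc]
    · rw [if_neg, if_neg hpe]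
      · simp
      · rintro ⟨h1, h2⟩
        have := hc p hp
        apply hpe
        have : p.1 = t := by omega
        obtain ⟨p1, p2⟩ := p
        simp_all
  rw [Finset.sum_congr rfl hterm, Finset.sum_ite_eq' c.support (t, j)] at happ
  by_cases hmem : (t, j) ∈ c.support
  · rw [if_pos hmem, hrem, add_zero] at happ
    exact happ.symm
  · rw [if_neg hmem, hrem, add_zero] at happ
    rw [Finsupp.notMem_support_iff.mp hmem]
    simp only [zero_mul, mul_zero]
    exact happ.symm

end

theorem stmt_7 [CharZero K] (P Q : Weyl K) (h : Q * P - P * Q = 1)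
    (a : (ℕ × ℕ) →₀ K) (hQ : Q = ∑ p ∈ a.support, a p • (wx K ^ p.1 * wy K ^ p.2))
    (s : ℕ) (hs : ∀ p ∈ a.support, p.1 ≤ s)
    (lam : K) (hlam : lam ≠ 0)
    (hlead : ∀ j : ℕ, a (s, j) = if j = 1 then lam else 0) :
    s = 0 := by
  by_contra hs0
  have hs1 : 1 ≤ s := Nat.one_le_iff_ne_zero.mpr hs0
  have hmem : (s, 1) ∈ a.support := Finsupp.mem_support_iff.mpr (by rw [hlead 1]; simpa)
  set R : Weyl K := ∑ p ∈ a.support.erase (s, 1), a p • (wx K ^ p.1 * wy K ^ p.2) with hRdef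
  have hQd : Q = lam • (wx K ^ s * wy K) + R := by
    rw [hQ, ← Finset.add_sum_erase _ _ hmem]
    congr 1
    rw [hlead 1]
    simp
  have hRF : R ∈ F K (s - 1) := by
    refine Submodule.sum_mem _ fun p hp => ?_
    obtain ⟨hpne, hpmem⟩ := Finset.mem_erase.mp hp
    have hp1 : p.1 ≤ s := hs p hpmem
    have hple : p.1 ≤ s - 1 := by
      rcases Nat.lt_or_ge p.1 s with hlt | hge
      · omega
      · exfalso
        have hps : p.1 = s := by omega
        have hne : a p ≠ 0 := Finsupp.mem_support_iff.mp hpmem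
        obtain ⟨p1, p2⟩ := p
        simp only at hps
        subst hps
        rw [hlead p2] at hne
        by_cases h2 : p2 = 1
        · exact hpne (by rw [h2])
        · rw [if_neg h2] at hne; exact hne rfl
    exact Submodule.smul_mem _ _ (mem_F' K hple)
  have main : ∀ t : ℕ, ∀ P' : Weyl K, P' ∈ F K t → Q * P' - P' * Q ≠ 1 := by
    intro t
    induction t with
    | zero =>
      intro P' hP' hcm
      obtain ⟨c, hc, hPrep⟩ := F_rep K hP'
      have hkey := key K hs1 hQd hRF c hc hPrep hcm
      rcases Nat.lt_or_ge s 2 with hslt | hsge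
      · have h0 := hkey 0
        rw [if_pos (by omega)] at h0
        simp at h0
      · have hc0 : ∀ j : ℕ, 1 ≤ j → c (0, j) = 0 := by
          intro j hj
          have h1 := hkey j
          rw [if_neg (by omega)] at h1
          rcases mul_eq_zero.mp h1.symm with h2 | h2
          · exact absurd h2 hlam
          rcases mul_eq_zero.mp h2 with h3 | h3
          · exact h3
          · exfalso
            rw [Nat.cast_zero, zero_sub, neg_eq_zero] at h3
            exact Nat.cast_ne_zero.mpr (show s * j ≠ 0 by positivity) (by push_cast; exact h3 : ((s * j : ℕ) : K) = 0)
        have hsub : c.support ⊆ {((0 : ℕ), (0 : ℕ))} := by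
          intro p hp
          have hp1 := hc p hp
          have hne := Finsupp.mem_support_iff.mp hp
          obtain ⟨p1, p2⟩ := p
          simp only at hp1
          have hp10 : p1 = 0 := by omega
          subst hp10
          simp only [Finset.mem_singleton]
          rcases Nat.eq_zero_or_pos p2 with rfl | hp2
          · rfl
          · exact absurd (hc0 p2 hp2) hne
        have hP1 : P' = c (0, 0) • (1 : Weyl K) := by
          rw [hPrep, Finset.sum_subset hsub
            (fun x _ hx => by rw [Finsupp.notMem_support_iff.mp hx, zero_smul]),
            Finset.sum_singleton]
          congr 1
          simp [wmon]
        rw [hP1, mul_smul_comm, smul_mul_assoc, mul_one, one_mul, sub_self] at hcm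
        have hz := congrArg (kap K 0 0) hcm
        rw [map_zero, kap_one] at hz
        simp at hz
    | succ t ih =>
      intro P' hP' hcm
      obtain ⟨c, hc, hPrep⟩ := F_rep K hP'
      have hkey := key K hs1 hQd hRF c hc hPrep hcm
      have hc0 : ∀ j : ℕ, c (t + 1, j) ≠ 0 → t + 1 = s * j := by
        intro j hj
        have h1 := hkey j
        rw [if_neg (by omega)] at h1
        have hd : ((t + 1 : ℕ) : K) - (s : K) * (j : K) = 0 := by
          rcases mul_eq_zero.mp h1.symm with h2 | h2
          · exact absurd h2 hlam
          rcases mul_eq_zero.mp h2 with h3 | h3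
          · exact absurd h3 hj
          · exact h3
        rw [sub_eq_zero] at hd
        have hcast : ((t + 1 : ℕ) : K) = ((s * j : ℕ) : K) := by
          push_cast
          push_cast at hd
          exact hd
        exact_mod_cast hcast
      by_cases hdvd : ∃ j0, t + 1 = s * j0
      · obtain ⟨j0, hj0⟩ := hdvd
        have hj01 : 1 ≤ j0 := by
          rcases Nat.eq_zero_or_pos j0 with rfl | hpos
          · simp at hj0
          · exact hpos
        have huniq : ∀ j, c (t + 1, j) ≠ 0 → j = j0 := by
          intro j hj
          have h1 := hc0 j hj
          exact Nat.eq_of_mul_eq_mul_left (show 0 < s by omega) (by rw [← h1, ← hj0])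
        set μ := c (t + 1, j0) with hμ
        have hsubt : ∀ p ∈ c.support.erase (t + 1, j0), p.1 ≤ t := by
          intro p hp
          obtain ⟨hpne, hpmem⟩ := Finset.mem_erase.mp hp
          have := hc p hpmem
          rcases Nat.lt_or_ge p.1 (t + 1) with hlt | hge
          · omega
          · exfalso
            have hp1 : p.1 = t + 1 := by omega
            have hcne := Finsupp.mem_support_iff.mp hpmem
            obtain ⟨p1, p2⟩ := p
            simp only at hp1
            subst hp1
            have := huniq p2 hcne
            subst this
            exact hpne rfl
        have hsplit : P' = (∑ p ∈ c.support.erase (t + 1, j0), c p • wmon K p)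
            + μ • wmon K (t + 1, j0) := by
          by_cases hmem2 : (t + 1, j0) ∈ c.support
          · rw [hPrep, ← Finset.sum_erase_add _ _ hmem2]
          · rw [hPrep, Finset.erase_eq_of_notMem hmem2, hμ,
              Finsupp.notMem_support_iff.mp hmem2, zero_smul, add_zero]
        obtain ⟨r, hrF2, hre⟩ := Qpow K hs1 hQd hRF j0 hj01
        have hrFt : r ∈ F K t := by
          have hst : s * j0 - 1 = t := by omega
          rw [← hst]; exact hrF2
        set d := μ / lam ^ j0 with hd
        have hPd : P' - d • Q ^ j0 ∈ F K t := by
          have hdl : d * lam ^ j0 = μ := div_mul_cancel₀ μ (pow_ne_zero j0 hlam)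
          have hexp : P' - d • Q ^ j0 = (∑ p ∈ c.support.erase (t + 1, j0), c p • wmon K p)
              + (μ • wmon K (t + 1, j0) - d • (lam ^ j0 • (wx K ^ (s * j0) * wy K ^ j0)))
              - d • r := by
            rw [hre]
            nth_rewrite 1 [hsplit]
            simp only [smul_add]
            abel
          have hzero : μ • wmon K (t + 1, j0)
              - d • (lam ^ j0 • (wx K ^ (s * j0) * wy K ^ j0)) = 0 := by
            rw [smul_smul, hdl]
            have hmm : wx K ^ (s * j0) * wy K ^ j0 = wmon K (t + 1, j0) := by
              rw [← hj0]; rfl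
            rw [hmm, sub_self]
          rw [hexp, hzero, add_zero]
          exact Submodule.sub_mem _
            (Submodule.sum_mem _ fun p hp => Submodule.smul_mem _ _ (mem_F' K (hsubt p hp)))
            (Submodule.smul_mem _ _ hrFt)
        have hcm' : Q * (P' - d • Q ^ j0) - (P' - d • Q ^ j0) * Q = 1 := by
          have hqq : Q * Q ^ j0 = Q ^ j0 * Q := by rw [← pow_succ', pow_succ]
          have hexp : Q * (P' - d • Q ^ j0) - (P' - d • Q ^ j0) * Q
              = (Q * P' - P' * Q) - d • (Q * Q ^ j0 - Q ^ j0 * Q) := by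
            simp only [mul_sub, sub_mul, mul_smul_comm, smul_mul_assoc, smul_sub]
            abel
          rw [hexp, hqq, sub_self, smul_zero, sub_zero, hcm]
        exact ih _ hPd hcm'
      · refine ih P' ?_ hcm
        have hall : ∀ p ∈ c.support, p.1 ≤ t := by
          intro p hp
          have := hc p hp
          rcases Nat.lt_or_ge p.1 (t + 1) with hlt | hge
          · omega
          · exfalso
            have hp1 : p.1 = t + 1 := by omega
            have hcne := Finsupp.mem_support_iff.mp hp
            obtain ⟨p1, p2⟩ := p
            simp only at hp1
            subst hp1
            exact hdvd ⟨p2, hc0 p2 hcne⟩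
        rw [hPrep]
        exact Submodule.sum_mem _ fun p hp => Submodule.smul_mem _ _ (mem_F' K (hall p hp))
  obtain ⟨t, hPt⟩ := Fspan K P
  exact main t P hPt h
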